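/- Let E be a real vector space, C ⊆ E a nonempty convex set, I a finite index set, V_i : C → ℝ affine for each i ∈ I, and V_Σ : C → ℝ affine. Suppose Pareto indifference holds: for all p, q ∈ C, if V_i(p) = V_i(q) for all i ∈ I then V_Σ(p) = V_Σ(q). Then there exist a constant c ∈ ℝ and weights w : I → ℝ such that V_Σ(p) = c + Σ_{i∈I} w_i·V_i(p) for all p ∈ C. -/

import Mathlib

open scoped BigOperators

section HarsanyiAux

variable {E : Type*} [AddCommGroup E] [Module ℝ E] {C : Set E}

/-- A function satisfying the two-point affine identity on a convex set maps convex
combinations to the corresponding combinations of values. -/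
lemma harsanyi_affine_map_sum (hconv : Convex ℝ C) (f : E → ℝ)
    (hf : ∀ x ∈ C, ∀ y ∈ C, ∀ β : ℝ, 0 ≤ β → β ≤ 1 →
        f (β • x + (1 - β) • y) = β * f x + (1 - β) * f y)
    {ι : Type*} (s : Finset ι) (w : ι → ℝ) (z : ι → E)
    (h0 : ∀ j ∈ s, 0 ≤ w j) (h1 : ∑ j ∈ s, w j = 1) (hz : ∀ j ∈ s, z j ∈ C) :
    f (∑ j ∈ s, w j • z j) = ∑ j ∈ s, w j * f (z j) := by
  have key : ∀ x ∈ C, ∀ y ∈ C, ∀ a b : ℝ, 0 ≤ a → 0 ≤ b → a + b = 1 →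
      f (a • x + b • y) = a * f x + b * f y := by
    intro x hx y hy a b ha hb hab
    have hb' : b = 1 - a := by linarith
    subst hb'
    exact hf x hx y hy a ha (by linarith)
  have hcx : ConvexOn ℝ C f :=
    ⟨hconv, fun x hx y hy a b ha hb hab => le_of_eq (by
      rw [key x hx y hy a b ha hb hab]; simp [smul_eq_mul])⟩
  have hcc : ConcaveOn ℝ C f :=
    ⟨hconv, fun x hx y hy a b ha hb hab => ge_of_eq (by
      rw [key x hx y hy a b ha hb hab]; simp [smul_eq_mul])⟩
  have h1' := hcx.map_sum_le h0 h1 hz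
  have h2' := hcc.le_map_sum h0 h1 hz
  simp only [smul_eq_mul] at h1' h2'
  exact le_antisymm h1' h2'

/-- Key linear-dependence transfer lemma: any linear relation (with coefficients summing
to zero) among the individual values transfers to the aggregate values. -/
lemma harsanyi_key (hconv : Convex ℝ C)
    {I : Type*} (V : I → E → ℝ) (Vagg : E → ℝ)
    (hV : ∀ i, ∀ x ∈ C, ∀ y ∈ C, ∀ β : ℝ, 0 ≤ β → β ≤ 1 →
        V i (β • x + (1 - β) • y) = β * V i x + (1 - β) * V i y)
    (hVagg : ∀ x ∈ C, ∀ y ∈ C, ∀ β : ℝ, 0 ≤ β → β ≤ 1 →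
        Vagg (β • x + (1 - β) • y) = β * Vagg x + (1 - β) * Vagg y)
    (pareto : ∀ p ∈ C, ∀ q ∈ C, (∀ i, V i p = V i q) → Vagg p = Vagg q)
    {ι : Type*} (s : Finset ι) (z : ι → E) (hz : ∀ j ∈ s, z j ∈ C)
    (d : ι → ℝ) (hd0 : ∑ j ∈ s, d j = 0)
    (hdV : ∀ i, ∑ j ∈ s, d j * V i (z j) = 0) :
    ∑ j ∈ s, d j * Vagg (z j) = 0 := by
  classical
  set P := s.filter (fun j => 0 < d j) with hP
  set N := s.filter (fun j => ¬ 0 < d j) with hN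
  have hsplit : ∀ u : ι → ℝ, ∑ j ∈ s, u j = ∑ j ∈ P, u j + ∑ j ∈ N, u j := fun u =>
    (Finset.sum_filter_add_sum_filter_not s _ u).symm
  set A := ∑ j ∈ P, d j with hA
  have hNeg : ∑ j ∈ N, (-d j) = A := by
    have h := hsplit d
    rw [hd0] at h
    have : ∑ j ∈ N, (-d j) = -∑ j ∈ N, d j := by rw [Finset.sum_neg_distrib]
    rw [this]; linarith
  have hA0 : 0 ≤ A := Finset.sum_nonneg (fun j hj => le_of_lt (Finset.mem_filter.1 hj).2)
  have hPC : ∀ j ∈ P, z j ∈ C := fun j hj => hz j (Finset.filter_subset _ _ hj)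
  have hNC : ∀ j ∈ N, z j ∈ C := fun j hj => hz j (Finset.filter_subset _ _ hj)
  rcases eq_or_lt_of_le hA0 with hA0' | hApos
  · -- A = 0 : all coefficients vanish
    have hPzero : ∀ j ∈ P, d j = 0 :=
      (Finset.sum_eq_zero_iff_of_nonneg
        (fun j hj => le_of_lt (Finset.mem_filter.1 hj).2)).1 hA0'.symm
    have hNzero : ∀ j ∈ N, d j = 0 := by
      have h1 : ∑ j ∈ N, (-d j) = 0 := by rw [hNeg, ← hA0']
      have h2 := (Finset.sum_eq_zero_iff_of_nonneg (fun j hj => by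
        have := (Finset.mem_filter.1 hj).2
        have := not_lt.mp this
        linarith)).1 h1
      intro j hj
      have := h2 j hj
      linarith
    rw [hsplit]
    rw [Finset.sum_eq_zero (fun j hj => by rw [hPzero j hj]; ring),
        Finset.sum_eq_zero (fun j hj => by rw [hNzero j hj]; ring)]
    ring
  · -- A > 0 : build two convex combinations with equal individual values
    have hAne : A ≠ 0 := ne_of_gt hApos
    set x := ∑ j ∈ P, (d j / A) • z j with hx
    set y := ∑ j ∈ N, ((-d j) / A) • z j with hy
    have hwP0 : ∀ j ∈ P, 0 ≤ d j / A := fun j hj =>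
      div_nonneg (le_of_lt (Finset.mem_filter.1 hj).2) hA0
    have hwN0 : ∀ j ∈ N, 0 ≤ (-d j) / A := fun j hj => by
      have := not_lt.mp (Finset.mem_filter.1 hj).2
      exact div_nonneg (by linarith) hA0
    have hwP1 : ∑ j ∈ P, d j / A = 1 := by
      rw [← Finset.sum_div, ← hA, div_self hAne]
    have hwN1 : ∑ j ∈ N, (-d j) / A = 1 := by
      rw [← Finset.sum_div, hNeg, div_self hAne]
    have hxC : x ∈ C := hconv.sum_mem hwP0 hwP1 hPC
    have hyC : y ∈ C := hconv.sum_mem hwN0 hwN1 hNC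
    have hVe : ∀ i, V i x = V i y := by
      intro i
      rw [hx, hy,
        harsanyi_affine_map_sum hconv (V i) (hV i) P _ z hwP0 hwP1 hPC,
        harsanyi_affine_map_sum hconv (V i) (hV i) N _ z hwN0 hwN1 hNC]
      have h := hdV i
      rw [hsplit] at h
      have e1 : ∑ j ∈ P, (d j / A) * V i (z j) = (∑ j ∈ P, d j * V i (z j)) / A := by
        rw [Finset.sum_div]
        exact Finset.sum_congr rfl (fun j _ => by ring)
      have e2 : ∑ j ∈ N, ((-d j) / A) * V i (z j) = (-∑ j ∈ N, d j * V i (z j)) / A := by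
        rw [← Finset.sum_neg_distrib, Finset.sum_div]
        exact Finset.sum_congr rfl (fun j _ => by ring)
      rw [e1, e2]
      congr 1
      linarith
    have hVae := pareto x hxC y hyC hVe
    rw [hx, hy,
      harsanyi_affine_map_sum hconv Vagg hVagg P _ z hwP0 hwP1 hPC,
      harsanyi_affine_map_sum hconv Vagg hVagg N _ z hwN0 hwN1 hNC] at hVae
    have e1 : ∑ j ∈ P, (d j / A) * Vagg (z j) = (∑ j ∈ P, d j * Vagg (z j)) / A := by
      rw [Finset.sum_div]
      exact Finset.sum_congr rfl (fun j _ => by ring)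
    have e2 : ∑ j ∈ N, ((-d j) / A) * Vagg (z j) = (-∑ j ∈ N, d j * Vagg (z j)) / A := by
      rw [← Finset.sum_neg_distrib, Finset.sum_div]
      exact Finset.sum_congr rfl (fun j _ => by ring)
    rw [e1, e2, div_eq_div_iff hAne hAne] at hVae
    have : ∑ j ∈ P, d j * Vagg (z j) = -∑ j ∈ N, d j * Vagg (z j) := by
      have := mul_right_cancel₀ hAne hVae
      linarith
    rw [hsplit]
    linarith

end HarsanyiAux

/-- **Harsanyi's aggregation theorem.** If finitely many individual affine value
functions `V i` and an affine aggregate value function `Vagg` on a nonempty convex set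
satisfy Pareto indifference, then the aggregate is a weighted sum of the individuals
plus a constant. -/
theorem harsanyi_aggregation
    {E : Type*} [AddCommGroup E] [Module ℝ E] {C : Set E}
    (hne : C.Nonempty) (hconv : Convex ℝ C)
    {I : Type*} [Fintype I]
    (V : I → E → ℝ) (Vagg : E → ℝ)
    (hV : ∀ i, ∀ x ∈ C, ∀ y ∈ C, ∀ β : ℝ, 0 ≤ β → β ≤ 1 →
        V i (β • x + (1 - β) • y) = β * V i x + (1 - β) * V i y)
    (hVagg : ∀ x ∈ C, ∀ y ∈ C, ∀ β : ℝ, 0 ≤ β → β ≤ 1 →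
        Vagg (β • x + (1 - β) • y) = β * Vagg x + (1 - β) * Vagg y)
    (pareto : ∀ p ∈ C, ∀ q ∈ C, (∀ i, V i p = V i q) → Vagg p = Vagg q) :
    ∃ (c : ℝ) (w : I → ℝ), ∀ p ∈ C, Vagg p = c + ∑ i, w i * V i p := by
  classical
  obtain ⟨p₀, hp₀⟩ := hne
  set φ : E → (I → ℝ) := fun p i => V i p - V i p₀ with hφ
  set g : E → ℝ := fun p => Vagg p - Vagg p₀ with hg
  set S : Set ((I → ℝ) × ℝ) := (fun p => (φ p, g p)) '' C with hS
  set G : Submodule ℝ ((I → ℝ) × ℝ) := Submodule.span ℝ S with hG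
  -- the span is the graph of a partial linear functional
  have hφdef : ∀ q i, φ q i = V i q - V i p₀ := fun q i => rfl
  have hgdef : ∀ q, g q = Vagg q - Vagg p₀ := fun q => rfl
  have hgraph : ∀ x ∈ G, x.1 = 0 → x.2 = 0 := by
    intro x hxG hx1
    rcases Submodule.mem_span_set'.1 hxG with ⟨n, f, v, hsum⟩
    have hvS : ∀ j : Fin n, (v j : (I → ℝ) × ℝ) ∈ S := fun j => (v j).2
    choose zc hzC hzv using fun j : Fin n => hvS j
    have hzC' : ∀ j ∈ Finset.univ, (Fin.cons p₀ zc : Fin (n+1) → E) j ∈ C := by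
      intro j _
      refine Fin.cases ?_ ?_ j
      · simpa using hp₀
      · intro k; simpa using hzC k
    have hd0 : ∑ j : Fin (n+1), (Fin.cons (-(∑ j, f j)) f : Fin (n+1) → ℝ) j = 0 := by
      simp [Fin.sum_univ_succ]
    have hv1 : ∀ j, ((v j : (I → ℝ) × ℝ)).1 = φ (zc j) := fun j => by rw [← hzv j]
    have hv2 : ∀ j, ((v j : (I → ℝ) × ℝ)).2 = g (zc j) := fun j => by rw [← hzv j]
    have hdV : ∀ i, ∑ j : Fin (n+1),
        (Fin.cons (-(∑ j, f j)) f : Fin (n+1) → ℝ) j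
          * V i ((Fin.cons p₀ zc : Fin (n+1) → E) j) = 0 := by
      intro i
      have hcomp : ∑ j : Fin n, f j * (φ (zc j) i) = 0 := by
        have h1 := congrArg
          ((LinearMap.proj i).comp (LinearMap.fst ℝ (I → ℝ) ℝ)) hsum
        simp only [map_sum, map_smul, LinearMap.comp_apply, LinearMap.fst_apply,
          LinearMap.proj_apply, smul_eq_mul] at h1
        rw [hx1] at h1
        calc ∑ j : Fin n, f j * (φ (zc j) i)
            = ∑ j : Fin n, f j * ((v j : (I → ℝ) × ℝ).1 i) :=
              Finset.sum_congr rfl (fun j _ => by rw [hv1 j])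
          _ = 0 := by rw [h1]; rfl
      rw [Fin.sum_univ_succ]
      simp only [Fin.cons_zero, Fin.cons_succ]
      have e : ∑ j : Fin n, f j * V i (zc j) - (∑ j : Fin n, f j) * V i p₀ = 0 := by
        rw [Finset.sum_mul, ← Finset.sum_sub_distrib, ← hcomp]
        exact Finset.sum_congr rfl (fun j _ => by rw [hφdef]; ring)
      linarith [e]
    have hres := harsanyi_key hconv V Vagg hV hVagg pareto Finset.univ
      (Fin.cons p₀ zc) hzC' (Fin.cons (-(∑ j, f j)) f) hd0 hdV
    have h2 : ∑ j : Fin n, f j * ((v j : (I → ℝ) × ℝ).2) = x.2 := by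
      have h1 := congrArg (LinearMap.snd ℝ (I → ℝ) ℝ) hsum
      simpa only [map_sum, map_smul, LinearMap.snd_apply, smul_eq_mul] using h1
    rw [Fin.sum_univ_succ] at hres
    simp only [Fin.cons_zero, Fin.cons_succ] at hres
    have e : ∑ j : Fin n, f j * Vagg (zc j)
        = ∑ j : Fin n, f j * ((v j : (I → ℝ) × ℝ).2) + (∑ j : Fin n, f j) * Vagg p₀ := by
      rw [Finset.sum_mul, ← Finset.sum_add_distrib]
      refine Finset.sum_congr rfl (fun j _ => ?_)
      rw [hv2 j, hgdef]; ring
    rw [e, h2] at hres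
    linarith
  have hmemG : ∀ p ∈ C, (φ p, g p) ∈ G := fun p hp =>
    Submodule.subset_span ⟨p, hp, rfl⟩
  -- value of the partial map on φ p is g p
  set D : Submodule ℝ (I → ℝ) := G.map (LinearMap.fst ℝ (I → ℝ) ℝ) with hD
  have hmemD : ∀ p ∈ C, φ p ∈ D := by
    intro p hp
    exact ⟨(φ p, g p), hmemG p hp, rfl⟩
  have happ : ∀ p (hp : p ∈ C),
      G.toLinearPMap ⟨φ p, hmemD p hp⟩ = g p := by
    intro p hp
    have h1 := G.mem_graph_toLinearPMap hgraph ⟨φ p, hmemD p hp⟩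
    have h2 := hmemG p hp
    have h3 : ((0 : I → ℝ), G.toLinearPMap ⟨φ p, hmemD p hp⟩ - g p) ∈ G := by
      have := Submodule.sub_mem G h1 h2
      convert this using 2 <;> simp <;> rfl
    have h4 : G.toLinearPMap ⟨φ p, hmemD p hp⟩ - g p = 0 := hgraph _ h3 rfl
    linarith
  -- extend to a global linear functional
  obtain ⟨L, hL⟩ := LinearMap.exists_extend (G.toLinearPMap.toFun)
  have hLφ : ∀ p (hp : p ∈ C), L (φ p) = g p := by
    intro p hp
    have hdom : G.toLinearPMap.domain = D := rfl
    have : L (φ p) = G.toLinearPMap.toFun ⟨φ p, by rw [hdom]; exact hmemD p hp⟩ := by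
      rw [← hL]; rfl
    rw [this]
    exact happ p hp
  -- express L as a weighted sum of coordinates
  set w : I → ℝ := fun i => L (fun j => if i = j then (1 : ℝ) else 0) with hw
  have hLsum : ∀ x : I → ℝ, L x = ∑ i, x i * w i := by
    intro x
    conv_lhs => rw [pi_eq_sum_univ x]
    rw [map_sum]
    refine Finset.sum_congr rfl (fun i _ => ?_)
    rw [map_smul, smul_eq_mul, hw]
  refine ⟨Vagg p₀ - ∑ i, w i * V i p₀, w, ?_⟩
  intro p hp
  have h1 : Vagg p = Vagg p₀ + L (φ p) := by
    rw [hLφ p hp, hgdef]; ring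
  rw [h1, hLsum (φ p)]
  have : ∑ i, φ p i * w i = ∑ i, w i * V i p - ∑ i, w i * V i p₀ := by
    rw [← Finset.sum_sub_distrib]
    refine Finset.sum_congr rfl (fun i _ => ?_)
    rw [hφdef]; ring
  rw [this]
  ring
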